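/- Let f : {0,1,…,B}^I → ℝ≥0 be monotone and lattice submodular, and let F¹,…,F^k be downward-closed families of vectors such that for each t ∈ {1,…,k} there exists a monotone α_t-CRS for F^t with respect to q. Then there exists a randomized mapping ψ such that: (i) for every vector v, every u in the support of ψ(v) lies in ⋂_{t=1}^k F^t and satisfies u(i) ∈ {0, v(i)} for all i ∈ I; and (ii) if v ∼ q and u ∼ ψ(v) then E[f(u)] ≥ (∏_{t=1}^k α_t)·E_{v∼q}[f(v)]. -/

import Mathlib

set_option linter.unusedSectionVars false
set_option maxHeartbeats 1000000


open Finset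

/-- A vector assigns to each item in `I` a state in `{0, 1, …, B}`. -/
abbrev Vec (I : Type) (B : ℕ) := I → Fin (B + 1)

section CRS

variable {I : Type} [Fintype I] [DecidableEq I] {B : ℕ}

/-- `q` assigns to each item a probability distribution on `{0, 1, …, B}`. -/
def IsDist (q : I → Fin (B + 1) → ℝ) : Prop :=
  (∀ i j, 0 ≤ q i j) ∧ ∀ i, ∑ j, q i j = 1

/-- Probability of the vector `v` when coordinates are drawn independently from `q`. -/
def vecProb (q : I → Fin (B + 1) → ℝ) (v : Vec I B) : ℝ := ∏ i, q i (v i)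

/-- A randomized mapping: for each vector `v`, `ψ v` is a probability distribution on vectors. -/
def IsKernel (ψ : Vec I B → Vec I B → ℝ) : Prop :=
  (∀ v u, 0 ≤ ψ v u) ∧ ∀ v, ∑ u, ψ v u = 1

/-- A family of vectors is downward closed. -/
def DownwardClosed (F : Set (Vec I B)) : Prop :=
  ∀ ⦃u v : Vec I B⦄, u ≤ v → v ∈ F → u ∈ F

/-- `ψ` is an `α`-contention resolution scheme for `F` with respect to `q`:
it is a randomized mapping whose output always lies in `F` and keeps each coordinate
of the input or zeroes it out, and each nonzero coordinate value is kept with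
(unconditional joint) probability at least `α` times its occurrence probability. -/
def IsCRS (q : I → Fin (B + 1) → ℝ) (F : Set (Vec I B)) (α : ℝ)
    (ψ : Vec I B → Vec I B → ℝ) : Prop :=
  IsKernel ψ ∧
  (∀ v u, ψ v u ≠ 0 → u ∈ F ∧ ∀ i, u i = 0 ∨ u i = v i) ∧
  ∀ (i : I) (j : Fin (B + 1)), j ≠ 0 →
    ∑ v : Vec I B, ∑ u : Vec I B,
        (if v i = j ∧ u i = j then vecProb q v * ψ v u else 0) ≥
      α * ∑ v : Vec I B, (if v i = j then vecProb q v else 0)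

/-- A CRS is monotone if the probability of keeping coordinate `i` does not increase
when the input vector grows (keeping coordinate `i` fixed). -/
def MonotoneCRS (ψ : Vec I B → Vec I B → ℝ) : Prop :=
  ∀ (u v : Vec I B) (i : I), u ≤ v → u i = v i →
    ∑ w : Vec I B, (if w i = u i then ψ u w else 0) ≥
      ∑ w : Vec I B, (if w i = v i then ψ v w else 0)

end CRS

/-- `f` is lattice submodular: for `u ≤ v`, the marginal gain of raising coordinate `i`
to `s` is at least as large at `u` as at `v`. -/
def LatticeSubmodular {I : Type} [Fintype I] [DecidableEq I] {B : ℕ}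
    (f : Vec I B → ℝ) : Prop :=
  ∀ u v : Vec I B, u ≤ v → ∀ (i : I) (s : Fin (B + 1)),
    f (v ⊔ fun j => if j = i then s else (0 : Fin (B + 1))) - f v ≤
      f (u ⊔ fun j => if j = i then s else (0 : Fin (B + 1))) - f u


lemma harris_anti {α : Type} [Fintype α] [DistribLattice α] (μ f g : α → ℝ)
    (hμ₀ : 0 ≤ μ) (hf₀ : 0 ≤ f) (hg₀ : 0 ≤ g) (hf : Antitone f) (hg : Antitone g)
    (hμ : ∀ a b, μ a * μ b ≤ μ (a ⊓ b) * μ (a ⊔ b)) :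
    (∑ a, μ a * f a) * ∑ a, μ a * g a ≤ (∑ a, μ a) * ∑ a, μ a * (f a * g a) := by
  have := fkg (α := αᵒᵈ) (μ := fun a => μ (OrderDual.ofDual a))
    (f := fun a => f (OrderDual.ofDual a)) (g := fun a => g (OrderDual.ofDual a))
    (fun a => hμ₀ _) (fun a => hf₀ _) (fun a => hg₀ _)
    (fun a b hab => hf hab) (fun a b hab => hg hab)
    (fun a b => by
      have h := hμ (OrderDual.ofDual a) (OrderDual.ofDual b)
      rw [_root_.ofDual_inf, _root_.ofDual_sup]
      linarith)
  exact this

lemma harris_iter {α : Type} [Fintype α] [DistribLattice α] (μ : α → ℝ)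
    (hμ₀ : ∀ a, 0 ≤ μ a) (hμ : ∀ a b, μ a * μ b ≤ μ (a ⊓ b) * μ (a ⊔ b))
    (hμ1 : ∑ a, μ a = 1)
    {τ : Type} [DecidableEq τ] (s : Finset τ) (h : τ → α → ℝ)
    (h₀ : ∀ t ∈ s, ∀ a, 0 ≤ h t a) (hanti : ∀ t ∈ s, Antitone (h t)) :
    (∏ t ∈ s, ∑ a, μ a * h t a) ≤ ∑ a, μ a * ∏ t ∈ s, h t a := by
  induction s using Finset.induction with
  | empty => simp [hμ1]
  | @insert t s hts ih =>
    have hg₀ : ∀ a, (0:ℝ) ≤ ∏ t' ∈ s, h t' a :=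
      fun a => Finset.prod_nonneg fun t' ht' => h₀ t' (mem_insert_of_mem ht') a
    have hganti : Antitone (fun a => ∏ t' ∈ s, h t' a) := by
      intro a b hab
      exact Finset.prod_le_prod (fun t' ht' => h₀ t' (mem_insert_of_mem ht') b)
        (fun t' ht' => hanti t' (mem_insert_of_mem ht') hab)
    have h1 : (∏ t' ∈ s, ∑ a, μ a * h t' a) ≤ ∑ a, μ a * ∏ t' ∈ s, h t' a :=
      ih (fun t' ht' => h₀ t' (mem_insert_of_mem ht'))
        (fun t' ht' => hanti t' (mem_insert_of_mem ht'))
    have hEt : (0:ℝ) ≤ ∑ a, μ a * h t a :=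
      Finset.sum_nonneg fun a _ => mul_nonneg (hμ₀ a) (h₀ t (mem_insert_self t s) a)
    rw [Finset.prod_insert hts]
    calc (∑ a, μ a * h t a) * ∏ t' ∈ s, ∑ a, μ a * h t' a
        ≤ (∑ a, μ a * h t a) * ∑ a, μ a * ∏ t' ∈ s, h t' a :=
          mul_le_mul_of_nonneg_left h1 hEt
      _ ≤ (∑ a, μ a) * ∑ a, μ a * (h t a * ∏ t' ∈ s, h t' a) :=
          harris_anti μ (h t) (fun a => ∏ t' ∈ s, h t' a)
            (fun a => hμ₀ a) (fun a => h₀ t (mem_insert_self t s) a) hg₀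
            (fun a b hab => hanti t (mem_insert_self t s) hab) hganti hμ
      _ = ∑ a, μ a * ∏ t' ∈ insert t s, h t' a := by
          rw [hμ1, one_mul]
          exact Finset.sum_congr rfl fun a _ => by rw [Finset.prod_insert hts]

section aux2
variable {I : Type} [Fintype I] [DecidableEq I] {B : ℕ}


lemma vec_le_of_or {u v : Vec I B} (h : ∀ i, u i = 0 ∨ u i = v i) : u ≤ v := by
  intro i
  rcases h i with h' | h'
  · rw [h']; exact Fin.zero_le _
  · rw [h']

lemma vecProb_nonneg {q : I → Fin (B + 1) → ℝ} (hq : ∀ i j, 0 ≤ q i j) (v : Vec I B) :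
    0 ≤ vecProb q v := Finset.prod_nonneg fun i _ => hq i (v i)

lemma vecProb_sum {q : I → Fin (B + 1) → ℝ} (hq : ∀ i, ∑ j, q i j = 1) :
    ∑ v : Vec I B, vecProb q v = 1 := by
  rw [← Fintype.prod_eq_one (fun i : I => ∑ j, q i j) fun i => hq i]
  rw [Finset.prod_univ_sum]
  rfl

lemma vecProb_supermod {q : I → Fin (B + 1) → ℝ} (a b : Vec I B) :
    vecProb q a * vecProb q b ≤ vecProb q (a ⊓ b) * vecProb q (a ⊔ b) := by
  unfold vecProb
  rw [← Finset.prod_mul_distrib, ← Finset.prod_mul_distrib]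
  apply le_of_eq
  refine Finset.prod_congr rfl fun i _ => ?_
  have : (a ⊓ b) i = a i ⊓ b i := rfl
  have h2 : (a ⊔ b) i = a i ⊔ b i := rfl
  rw [this, h2]
  rcases le_total (a i) (b i) with h | h
  · rw [inf_eq_left.mpr h, sup_eq_right.mpr h]
  · rw [inf_eq_right.mpr h, sup_eq_left.mpr h, mul_comm]

/-- the distribution conditioned on coordinate `i` being `j`. -/
def condDist (q : I → Fin (B + 1) → ℝ) (i : I) (j : Fin (B + 1)) : I → Fin (B + 1) → ℝ :=
  Function.update q i (fun j' => if j' = j then 1 else 0)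

lemma condDist_nonneg {q : I → Fin (B + 1) → ℝ} (hq : ∀ i j, 0 ≤ q i j) (i : I)
    (j : Fin (B + 1)) : ∀ i' j', 0 ≤ condDist q i j i' j' := by
  intro i' j'
  unfold condDist
  rcases eq_or_ne i' i with rfl | h
  · simp only [Function.update_self]
    split <;> norm_num
  · rw [Function.update_of_ne h]; exact hq i' j'

lemma condDist_sum {q : I → Fin (B + 1) → ℝ} (hq : ∀ i, ∑ j, q i j = 1) (i : I)
    (j : Fin (B + 1)) : ∀ i', ∑ j', condDist q i j i' j' = 1 := by
  intro i'
  unfold condDist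
  rcases eq_or_ne i' i with rfl | h
  · simp [Finset.sum_ite_eq']
  · rw [Function.update_of_ne h]; exact hq i'

lemma cond_apply {q : I → Fin (B + 1) → ℝ} (i : I) (j : Fin (B + 1)) (v : Vec I B) :
    (if v i = j then vecProb q v else 0) = q i j * vecProb (condDist q i j) v := by
  unfold vecProb
  rw [← Finset.mul_prod_erase univ _ (mem_univ i), ← Finset.mul_prod_erase univ
    (fun i' => condDist q i j i' (v i')) (mem_univ i)]
  have herase : ∏ i' ∈ univ.erase i, condDist q i j i' (v i') =
      ∏ i' ∈ univ.erase i, q i' (v i') := by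
    refine Finset.prod_congr rfl fun i' hi' => ?_
    rw [condDist, Function.update_of_ne (Finset.ne_of_mem_erase hi')]
  rw [herase]
  have hci : condDist q i j i (v i) = if v i = j then 1 else 0 := by
    rw [condDist, Function.update_self]
  rw [hci]
  split_ifs with h
  · rw [h]; ring
  · ring

lemma cond_vanish {q : I → Fin (B + 1) → ℝ} {i : I} {j : Fin (B + 1)} {v : Vec I B}
    (h : v i ≠ j) : vecProb (condDist q i j) v = 0 := by
  refine Finset.prod_eq_zero (mem_univ i) ?_
  rw [condDist, Function.update_self, if_neg h]

lemma marginal_eq {q : I → Fin (B + 1) → ℝ} (hq : ∀ i, ∑ j, q i j = 1) (i : I)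
    (j : Fin (B + 1)) : ∑ v : Vec I B, (if v i = j then vecProb q v else 0) = q i j := by
  calc ∑ v : Vec I B, (if v i = j then vecProb q v else 0)
      = ∑ v : Vec I B, q i j * vecProb (condDist q i j) v :=
        Finset.sum_congr rfl fun v _ => cond_apply i j v
    _ = q i j := by
        rw [← Finset.mul_sum, vecProb_sum (condDist_sum hq i j), mul_one]

end aux2

section aux3
variable {I : Type} [Fintype I] [DecidableEq I] {B : ℕ}

/-- composition of the first `t` kernels. -/
def compKer (k : ℕ) (Ψ : Fin k → Vec I B → Vec I B → ℝ) : ℕ → Vec I B → Vec I B → ℝ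
  | 0, v, u => if u = v then 1 else 0
  | t+1, v, u => if h : t < k then ∑ w, compKer k Ψ t v w * Ψ ⟨t, h⟩ w u
      else compKer k Ψ t v u

variable {k : ℕ} {Ψ : Fin k → Vec I B → Vec I B → ℝ}

lemma compKer_nonneg (hK : ∀ s v u, 0 ≤ Ψ s v u) :
    ∀ t v u, 0 ≤ compKer k Ψ t v u := by
  intro t
  induction t with
  | zero => intro v u; simp only [compKer]; split <;> norm_num
  | succ t ih =>
    intro v u
    simp only [compKer]
    split
    · exact Finset.sum_nonneg fun w _ => mul_nonneg (ih v w) (hK _ w u)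
    · exact ih v u

lemma compKer_sum (hK : ∀ s v u, 0 ≤ Ψ s v u) (hK1 : ∀ s v, ∑ u, Ψ s v u = 1) :
    ∀ t v, ∑ u, compKer k Ψ t v u = 1 := by
  intro t
  induction t with
  | zero => intro v; simp [compKer]
  | succ t ih =>
    intro v
    simp only [compKer]
    split
    · rw [Finset.sum_comm]
      calc ∑ w, ∑ u, compKer k Ψ t v w * Ψ _ w u
          = ∑ w, compKer k Ψ t v w * ∑ u, Ψ _ w u := by
            exact Finset.sum_congr rfl fun w _ => (Finset.mul_sum _ _ _).symm
        _ = 1 := by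
            rw [← ih v]
            exact Finset.sum_congr rfl fun w _ => by rw [hK1, mul_one]
    · exact ih v

lemma compKer_support (hsupp : ∀ s v u, Ψ s v u ≠ 0 → ∀ i, u i = 0 ∨ u i = v i) :
    ∀ t v u, compKer k Ψ t v u ≠ 0 → ∀ i, u i = 0 ∨ u i = v i := by
  intro t
  induction t with
  | zero =>
    intro v u h i
    simp only [compKer] at h
    split at h
    · subst ‹u = v›; right; rfl
    · exact absurd rfl h
  | succ t ih =>
    intro v u h i
    simp only [compKer] at h
    split at h
    · obtain ⟨w, -, hw⟩ := Finset.exists_ne_zero_of_sum_ne_zero h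
      have h1 := ih v w (left_ne_zero_of_mul hw) i
      have h2 := hsupp _ w u (right_ne_zero_of_mul hw) i
      rcases h2 with h2 | h2
      · left; exact h2
      · rw [h2]; exact h1
    · exact ih v u h i

lemma compKer_mem (F : Fin k → Set (Vec I B))
    (hdc : ∀ s, ∀ ⦃a b : Vec I B⦄, a ≤ b → b ∈ F s → a ∈ F s)
    (hsupp : ∀ s v u, Ψ s v u ≠ 0 → ∀ i, u i = 0 ∨ u i = v i)
    (hmem : ∀ s v u, Ψ s v u ≠ 0 → u ∈ F s) :
    ∀ t v u, compKer k Ψ t v u ≠ 0 → ∀ s : Fin k, (s : ℕ) < t → u ∈ F s := by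
  intro t
  induction t with
  | zero => intro v u h s hs; omega
  | succ t ih =>
    intro v u h s hs
    simp only [compKer] at h
    split at h
    case isTrue htk =>
      obtain ⟨w, -, hw⟩ := Finset.exists_ne_zero_of_sum_ne_zero h
      have hCw := left_ne_zero_of_mul hw
      have hΨw := right_ne_zero_of_mul hw
      rcases Nat.lt_or_ge (s : ℕ) t with hst | hst
      · have hwF := ih v w hCw s hst
        have : u ≤ w := fun i => by
          rcases hsupp _ w u hΨw i with h' | h'
          · rw [h']; exact Fin.zero_le _
          · rw [h']
        exact hdc s this hwF
      · have : s = ⟨t, htk⟩ := by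
          apply Fin.ext; simp; omega
        subst this
        exact hmem _ w u hΨw
    case isFalse htk =>
      have : (s : ℕ) < t := by have := s.isLt; omega
      exact ih v u h s this

lemma compKer_keep (hK : ∀ s v u, 0 ≤ Ψ s v u)
    (hsupp : ∀ s v u, Ψ s v u ≠ 0 → ∀ i, u i = 0 ∨ u i = v i)
    (hmono : ∀ s, ∀ (a b : Vec I B) (i : I), a ≤ b → a i = b i →
      ∑ w : Vec I B, (if w i = a i then Ψ s a w else 0) ≥
        ∑ w : Vec I B, (if w i = b i then Ψ s b w else 0))
    (i : I) (j : Fin (B + 1)) :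
    ∀ t (v : Vec I B), v i = j →
      (∏ s ∈ univ.filter (fun s : Fin k => (s : ℕ) < t),
          ∑ w : Vec I B, (if w i = j then Ψ s v w else 0)) ≤
        ∑ u : Vec I B, (if u i = j then compKer k Ψ t v u else 0) := by
  intro t
  induction t with
  | zero =>
    intro v hv
    have hfil : univ.filter (fun s : Fin k => (s : ℕ) < 0) = ∅ := by
      apply Finset.eq_empty_of_forall_notMem; intro s hs; simp at hs
    rw [hfil, Finset.prod_empty]
    have : ∀ u : Vec I B, (if u i = j then compKer k Ψ 0 v u else 0) =
        if u = v then (if u i = j then 1 else 0) else 0 := by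
      intro u
      simp only [compKer]
      by_cases h : u = v <;> by_cases h' : u i = j <;> simp [h, h']
    rw [Finset.sum_congr rfl fun u _ => this u, Finset.sum_ite_eq' univ v]
    simp [hv]
  | succ t ih =>
    intro v hv
    by_cases htk : t < k
    · have hfil : univ.filter (fun s : Fin k => (s : ℕ) < t + 1) =
          insert ⟨t, htk⟩ (univ.filter (fun s : Fin k => (s : ℕ) < t)) := by
        ext s
        simp only [Finset.mem_filter, Finset.mem_insert, Finset.mem_univ, true_and]
        constructor
        · intro h
          rcases Nat.lt_or_ge (s : ℕ) t with h' | h'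
          · right; exact h'
          · left; apply Fin.ext; simp; omega
        · intro h
          rcases h with h | h
          · subst h; simp
          · omega
      have hnotmem : (⟨t, htk⟩ : Fin k) ∉ univ.filter (fun s : Fin k => (s : ℕ) < t) := by
        simp
      rw [hfil, Finset.prod_insert hnotmem]
      set κt : ℝ := ∑ w : Vec I B, (if w i = j then Ψ ⟨t, htk⟩ v w else 0) with hκt
      have hκt0 : 0 ≤ κt := Finset.sum_nonneg fun w _ => by
        split
        · exact hK _ v w
        · exact le_rfl
      -- RHS rewrite
      have hrhs : ∑ u : Vec I B, (if u i = j then compKer k Ψ (t+1) v u else 0) =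
          ∑ w : Vec I B, compKer k Ψ t v w *
            ∑ u : Vec I B, (if u i = j then Ψ ⟨t, htk⟩ w u else 0) := by
        simp only [compKer, dif_pos htk]
        have h1 : ∀ u : Vec I B,
            (if u i = j then ∑ w, compKer k Ψ t v w * Ψ ⟨t, htk⟩ w u else 0) =
            ∑ w, (if u i = j then compKer k Ψ t v w * Ψ ⟨t, htk⟩ w u else 0) := by
          intro u
          split_ifs with h
          · rfl
          · exact Finset.sum_const_zero.symm
        rw [Finset.sum_congr rfl fun u _ => h1 u, Finset.sum_comm]
        refine Finset.sum_congr rfl fun w _ => ?_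
        rw [Finset.mul_sum]
        exact Finset.sum_congr rfl fun u _ => by rw [mul_ite, mul_zero]
      have hstep : ∀ w : Vec I B,
          (if w i = j then compKer k Ψ t v w * κt else 0) ≤
          compKer k Ψ t v w * ∑ u : Vec I B, (if u i = j then Ψ ⟨t, htk⟩ w u else 0) := by
        intro w
        split_ifs with hw
        · by_cases hC : compKer k Ψ t v w = 0
          · rw [hC, zero_mul, zero_mul]
          · have hle : w ≤ v := by
              intro i'
              rcases compKer_support hsupp t v w hC i' with h' | h'
              · rw [h']; exact Fin.zero_le _
              · rw [h']
            have hmn := hmono ⟨t, htk⟩ w v i hle (hw.trans hv.symm)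
            rw [hw, hv] at hmn
            exact mul_le_mul_of_nonneg_left hmn (compKer_nonneg hK t v w)
        · exact mul_nonneg (compKer_nonneg hK t v w)
            (Finset.sum_nonneg fun u _ => by
              split
              · exact hK _ w u
              · exact le_rfl)
      calc κt * ∏ s ∈ univ.filter (fun s : Fin k => (s : ℕ) < t),
              ∑ w : Vec I B, (if w i = j then Ψ s v w else 0)
          ≤ κt * ∑ u : Vec I B, (if u i = j then compKer k Ψ t v u else 0) :=
            mul_le_mul_of_nonneg_left (ih v hv) hκt0
        _ = ∑ w : Vec I B, (if w i = j then compKer k Ψ t v w * κt else 0) := by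
            rw [Finset.mul_sum]
            exact Finset.sum_congr rfl fun w _ => by
              rw [mul_ite, mul_zero, mul_comm]
        _ ≤ ∑ w : Vec I B, compKer k Ψ t v w *
              ∑ u : Vec I B, (if u i = j then Ψ ⟨t, htk⟩ w u else 0) :=
            Finset.sum_le_sum fun w _ => hstep w
        _ = ∑ u : Vec I B, (if u i = j then compKer k Ψ (t+1) v u else 0) := hrhs.symm
    · have hfil : univ.filter (fun s : Fin k => (s : ℕ) < t + 1) =
          univ.filter (fun s : Fin k => (s : ℕ) < t) := by
        ext s
        simp only [Finset.mem_filter, Finset.mem_univ, true_and]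
        have := s.isLt; omega
      rw [hfil]
      have := ih v hv
      refine le_trans this (le_of_eq (Finset.sum_congr rfl fun u _ => ?_))
      simp only [compKer, dif_neg htk]

lemma compKer_keep_all (hK : ∀ s v u, 0 ≤ Ψ s v u)
    (hsupp : ∀ s v u, Ψ s v u ≠ 0 → ∀ i, u i = 0 ∨ u i = v i)
    (hmono : ∀ s, ∀ (a b : Vec I B) (i : I), a ≤ b → a i = b i →
      ∑ w : Vec I B, (if w i = a i then Ψ s a w else 0) ≥
        ∑ w : Vec I B, (if w i = b i then Ψ s b w else 0))
    (i : I) (j : Fin (B + 1)) (v : Vec I B) (hv : v i = j) :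
    (∏ s : Fin k, ∑ w : Vec I B, (if w i = j then Ψ s v w else 0)) ≤
      ∑ u : Vec I B, (if u i = j then compKer k Ψ k v u else 0) := by
  have := compKer_keep hK hsupp hmono i j k v hv
  rwa [Finset.filter_true_of_mem (fun s _ => s.isLt)] at this

section aux4
variable {I : Type} [Fintype I] [DecidableEq I] {B : ℕ}

/-- the all-zero vector except `s` at coordinate `i`. -/
abbrev jvec (i : I) (s : Fin (B + 1)) : Vec I B :=
  fun j => if j = i then s else (0 : Fin (B + 1))

/-- truncation of `v` to the coordinates with index `< m` under the enumeration `eqv`. -/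
def truncV (eqv : I ≃ Fin (Fintype.card I)) (m : ℕ) (v : Vec I B) : Vec I B :=
  fun i => if ((eqv i : ℕ) < m) then v i else 0

variable {eqv : I ≃ Fin (Fintype.card I)}

lemma truncV_zero (v : Vec I B) : truncV eqv 0 v = 0 := by
  funext i; simp [truncV]

lemma truncV_card (v : Vec I B) : truncV eqv (Fintype.card I) v = v := by
  funext i; simp [truncV, (eqv i).isLt]

lemma truncV_mono (m : ℕ) {u v : Vec I B} (h : u ≤ v) :
    truncV eqv m u ≤ truncV eqv m v := by
  intro i
  unfold truncV
  split
  · exact h i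
  · exact le_rfl

lemma truncV_succ (m : Fin (Fintype.card I)) (v : Vec I B) :
    truncV eqv ((m : ℕ) + 1) v =
      truncV eqv (m : ℕ) v ⊔ jvec (eqv.symm m) (v (eqv.symm m)) := by
  funext i
  have happ : (truncV eqv (m : ℕ) v ⊔ jvec (eqv.symm m) (v (eqv.symm m))) i =
      truncV eqv (m : ℕ) v i ⊔ jvec (eqv.symm m) (v (eqv.symm m)) i := rfl
  rw [happ]
  unfold truncV jvec
  rcases lt_trichotomy ((eqv i : ℕ)) (m : ℕ) with h | h | h
  · have h1 : (eqv i : ℕ) < (m : ℕ) + 1 := by omega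
    have h2 : i ≠ eqv.symm m := by
      intro hh; rw [hh, Equiv.apply_symm_apply] at h; exact lt_irrefl _ h
    rw [if_pos h1, if_pos h, if_neg h2]
    exact (sup_eq_left.mpr (Fin.zero_le _)).symm
  · have h1 : (eqv i : ℕ) < (m : ℕ) + 1 := by omega
    have h2 : i = eqv.symm m := by
      apply eqv.injective; rw [Equiv.apply_symm_apply]; exact Fin.ext h
    have h3 : ¬ ((eqv i : ℕ) < (m : ℕ)) := by omega
    rw [if_pos h1, if_neg h3, if_pos h2, h2]
    exact (sup_eq_right.mpr (Fin.zero_le _)).symm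
  · have h1 : ¬ ((eqv i : ℕ) < (m : ℕ) + 1) := by omega
    have h2 : i ≠ eqv.symm m := by
      intro hh; rw [hh, Equiv.apply_symm_apply] at h; exact lt_irrefl _ h
    have h3 : ¬ ((eqv i : ℕ) < (m : ℕ)) := by omega
    rw [if_neg h1, if_neg h3, if_neg h2]
    exact (sup_eq_left.mpr le_rfl).symm

lemma sup_jvec_zero (w : Vec I B) (i : I) : w ⊔ jvec i 0 = w := by
  apply sup_eq_left.mpr
  intro i'
  unfold jvec
  split <;> exact Fin.zero_le _

variable {f : Vec I B → ℝ}

/-- marginal gain of raising coordinate `eqv.symm m` to `j` on top of the `m`-truncation. -/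
def gainG (eqv : I ≃ Fin (Fintype.card I)) (f : Vec I B → ℝ)
    (m : Fin (Fintype.card I)) (j : Fin (B + 1)) (v : Vec I B) : ℝ :=
  f (truncV eqv (m : ℕ) v ⊔ jvec (eqv.symm m) j) - f (truncV eqv (m : ℕ) v)

lemma gainG_nonneg (hfmono : Monotone f) (m : Fin (Fintype.card I)) (j : Fin (B + 1))
    (v : Vec I B) : 0 ≤ gainG eqv f m j v :=
  sub_nonneg.mpr (hfmono le_sup_left)

lemma gainG_anti (hfsub : LatticeSubmodular f) (m : Fin (Fintype.card I)) (j : Fin (B + 1)) :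
    Antitone (gainG eqv f m j) := by
  intro u v huv
  exact hfsub (truncV eqv (m : ℕ) u) (truncV eqv (m : ℕ) v) (truncV_mono _ huv) (eqv.symm m) j

lemma gainG_zero (m : Fin (Fintype.card I)) (v : Vec I B) :
    gainG eqv f m 0 v = 0 := by
  unfold gainG
  rw [sup_jvec_zero, sub_self]

lemma telescope (v : Vec I B) :
    ∑ m : Fin (Fintype.card I), gainG eqv f m (v (eqv.symm m)) v = f v - f 0 := by
  have h : ∀ m : Fin (Fintype.card I), gainG eqv f m (v (eqv.symm m)) v =
      f (truncV eqv ((m : ℕ) + 1) v) - f (truncV eqv (m : ℕ) v) := by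
    intro m
    unfold gainG
    rw [truncV_succ]
  rw [Finset.sum_congr rfl fun m _ => h m, ← Finset.sum_range
    (fun m => f (truncV eqv (m + 1) v) - f (truncV eqv m v)),
    Finset.sum_range_sub (fun m => f (truncV eqv m v)), truncV_zero, truncV_card]

/-- key pointwise bound via lattice submodularity. -/
lemma pointwise_bound (hfmono : Monotone f) (hfsub : LatticeSubmodular f)
    (v u : Vec I B) (hu : ∀ i, u i = 0 ∨ u i = v i) :
    f 0 + ∑ m : Fin (Fintype.card I),
        (if u (eqv.symm m) = v (eqv.symm m) ∧ v (eqv.symm m) ≠ 0 then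
          gainG eqv f m (v (eqv.symm m)) v else 0) ≤ f u := by
  have huv : u ≤ v := by
    intro i
    rcases hu i with h | h
    · rw [h]; exact Fin.zero_le _
    · rw [h]
  have hterm : ∀ m : Fin (Fintype.card I),
      (if u (eqv.symm m) = v (eqv.symm m) ∧ v (eqv.symm m) ≠ 0 then
        gainG eqv f m (v (eqv.symm m)) v else 0) ≤ gainG eqv f m (u (eqv.symm m)) u := by
    intro m
    rcases hu (eqv.symm m) with h | h
    · rw [h, gainG_zero]
      split_ifs with hc
      · exact absurd hc.1.symm hc.2
      · exact le_rfl
    · rw [h]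
      split_ifs with hc
      · exact gainG_anti hfsub m (v (eqv.symm m)) huv
      · push_neg at hc
        rw [hc rfl, gainG_zero]
  calc f 0 + ∑ m : Fin (Fintype.card I), (if u (eqv.symm m) = v (eqv.symm m) ∧
          v (eqv.symm m) ≠ 0 then gainG eqv f m (v (eqv.symm m)) v else 0)
      ≤ f 0 + ∑ m : Fin (Fintype.card I), gainG eqv f m (u (eqv.symm m)) u :=
        add_le_add le_rfl (Finset.sum_le_sum fun m _ => hterm m)
    _ = f u := by rw [telescope]; ring

lemma telescope_ite (v : Vec I B) :
    ∑ m : Fin (Fintype.card I),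
      (if v (eqv.symm m) ≠ 0 then gainG eqv f m (v (eqv.symm m)) v else 0) = f v - f 0 := by
  rw [← telescope (eqv := eqv) (f := f) v]
  refine Finset.sum_congr rfl fun m _ => ?_
  split_ifs with h
  · rfl
  · push_neg at h
    rw [h, gainG_zero]

end aux4

section claim
variable {I : Type} [Fintype I] [DecidableEq I] {B : ℕ}

lemma claim2_lemma (q : I → Fin (B + 1) → ℝ) (hq0 : ∀ i j, 0 ≤ q i j)
    (hq1 : ∀ i, ∑ j, q i j = 1)
    (f : Vec I B → ℝ) (hfmono : Monotone f) (hfsub : LatticeSubmodular f)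
    {k : ℕ} {Ψ : Fin k → Vec I B → Vec I B → ℝ}
    (hK0 : ∀ s (v u : Vec I B), 0 ≤ Ψ s v u)
    (hsupp : ∀ s (v u : Vec I B), Ψ s v u ≠ 0 → ∀ i, u i = 0 ∨ u i = v i)
    (hmono' : ∀ s, ∀ (a b : Vec I B) (i : I), a ≤ b → a i = b i →
      ∑ w : Vec I B, (if w i = a i then Ψ s a w else 0) ≥
        ∑ w : Vec I B, (if w i = b i then Ψ s b w else 0))
    (α : Fin k → ℝ) (hα : ∀ t, α t ∈ Set.Icc (0:ℝ) 1)
    (hbal : ∀ (s : Fin k) (i : I) (j : Fin (B + 1)), j ≠ 0 →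
      ∑ v : Vec I B, ∑ u : Vec I B,
          (if v i = j ∧ u i = j then vecProb q v * Ψ s v u else 0) ≥
        α s * ∑ v : Vec I B, (if v i = j then vecProb q v else 0))
    (eqv : I ≃ Fin (Fintype.card I)) (m : Fin (Fintype.card I)) (j : Fin (B + 1)) (hj : j ≠ 0) :
    (∏ t, α t) * ∑ v : Vec I B, (if v (eqv.symm m) = j then
        vecProb q v * gainG eqv f m j v else 0) ≤
      ∑ v : Vec I B, (if v (eqv.symm m) = j then
        vecProb q v * (gainG eqv f m j v *
          ∑ u : Vec I B, (if u (eqv.symm m) = v (eqv.symm m) then compKer k Ψ k v u else 0))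
        else 0) := by
  set i := eqv.symm m with hidef
  set R := vecProb (condDist q i j) with hR
  have hR0 : ∀ v, 0 ≤ R v := vecProb_nonneg (condDist_nonneg hq0 i j)
  have hRsum : ∑ v : Vec I B, R v = 1 := vecProb_sum (condDist_sum hq1 i j)
  have hRsupp : ∀ v : Vec I B, R v ≠ 0 → v i = j := by
    intro v h
    by_contra h'
    exact h (by rw [hR]; exact cond_vanish h')
  have hca : ∀ (H : Vec I B → ℝ) (v : Vec I B),
      (if v i = j then vecProb q v * H v else 0) = q i j * (R v * H v) := by
    intro H v
    by_cases hvi : v i = j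
    · have h1 := cond_apply (q := q) i j v
      rw [if_pos hvi] at h1
      rw [if_pos hvi, h1, hR]
      ring
    · have h2 : R v = 0 := by rw [hR]; exact cond_vanish hvi
      rw [if_neg hvi, h2]
      ring
  set κ : Fin k → Vec I B → ℝ :=
    fun s v => ∑ w : Vec I B, (if w i = j then Ψ s (Function.update v i j) w else 0) with hκ
  have hκ0 : ∀ s v, 0 ≤ κ s v := by
    intro s v
    refine Finset.sum_nonneg fun w _ => ?_
    split
    · exact hK0 s _ w
    · exact le_rfl
  have hκanti : ∀ s, Antitone (κ s) := by
    intro s a b hab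
    have hu : Function.update a i j ≤ Function.update b i j := by
      intro i'
      by_cases h' : i' = i
      · subst h'
        rw [Function.update_self, Function.update_self]
      · rw [Function.update_of_ne h', Function.update_of_ne h']
        exact hab i'
    have hmn := hmono' s (Function.update a i j) (Function.update b i j) i hu
      (by rw [Function.update_self, Function.update_self])
    rw [Function.update_self, Function.update_self] at hmn
    exact hmn
  have hκrepl : ∀ (s : Fin k) (v : Vec I B), R v ≠ 0 →
      κ s v = ∑ w : Vec I B, (if w i = j then Ψ s v w else 0) := by
    intro s v h
    have hvi := hRsupp v h
    have hup : Function.update v i j = v := by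
      rw [← hvi]
      exact Function.update_eq_self i v
    simp only [hκ, hup]
  have hκE : ∀ s, q i j * α s ≤ q i j * ∑ v, R v * κ s v := by
    intro s
    have e2 : ∑ v : Vec I B, ∑ u : Vec I B,
        (if v i = j ∧ u i = j then vecProb q v * Ψ s v u else 0) =
        ∑ v : Vec I B, q i j * (R v * κ s v) := by
      refine Finset.sum_congr rfl fun v _ => ?_
      by_cases hvi : v i = j
      · have h1 : ∑ u : Vec I B, (if v i = j ∧ u i = j then vecProb q v * Ψ s v u else 0) =
            vecProb q v * ∑ u : Vec I B, (if u i = j then Ψ s v u else 0) := by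
          rw [Finset.mul_sum]
          refine Finset.sum_congr rfl fun u _ => ?_
          by_cases hui : u i = j
          · rw [if_pos ⟨hvi, hui⟩, if_pos hui]
          · rw [if_neg (fun hc => hui hc.2), if_neg hui, mul_zero]
        rw [h1]
        have h3 := hca (fun v => ∑ u : Vec I B, (if u i = j then Ψ s v u else 0)) v
        rw [if_pos hvi] at h3
        rw [h3]
        by_cases hRv : R v = 0
        · rw [hRv]; ring
        · rw [hκrepl s v hRv]
      · have h1 : ∑ u : Vec I B, (if v i = j ∧ u i = j then vecProb q v * Ψ s v u else 0) = 0 :=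
          Finset.sum_eq_zero fun u _ => if_neg (fun hc => hvi hc.1)
        have h2 : R v = 0 := by rw [hR]; exact cond_vanish hvi
        rw [h1, h2]
        ring
    have e3 := hbal s i j hj
    rw [e2, marginal_eq hq1 i j, ← Finset.mul_sum] at e3
    calc q i j * α s = α s * q i j := mul_comm _ _
      _ ≤ q i j * ∑ v, R v * κ s v := e3
  by_cases hq00 : q i j = 0
  · have z : ∀ (H : Vec I B → ℝ),
        ∑ v : Vec I B, (if v i = j then vecProb q v * H v else 0) = 0 := by
      intro H
      refine Finset.sum_eq_zero fun v _ => ?_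
      rw [hca H v, hq00, zero_mul]
    rw [z, z, mul_zero]
  have hqpos : 0 < q i j := lt_of_le_of_ne (hq0 i j) (Ne.symm hq00)
  have hG0 : ∀ v, 0 ≤ gainG eqv f m j v := gainG_nonneg hfmono m j
  have hGanti : Antitone (gainG eqv f m j) := gainG_anti hfsub m j
  have hEG0 : 0 ≤ ∑ v, R v * gainG eqv f m j v :=
    Finset.sum_nonneg fun v _ => mul_nonneg (hR0 v) (hG0 v)
  have hRsup : ∀ a b : Vec I B, R a * R b ≤ R (a ⊓ b) * R (a ⊔ b) := by
    intro a b
    rw [hR]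
    exact vecProb_supermod a b
  have hhar := harris_iter R hR0 hRsup hRsum (Finset.univ : Finset (Option (Fin k)))
    (fun o v => o.elim (gainG eqv f m j v) (fun s => κ s v))
    (fun o _ v => by cases o with
      | none => exact hG0 v
      | some s => exact hκ0 s v)
    (fun o _ => by cases o with
      | none => exact hGanti
      | some s => exact hκanti s)
  have hprod1 : (∏ o : Option (Fin k), ∑ v, R v *
        (Option.elim o (gainG eqv f m j v) (fun s => κ s v))) =
      (∑ v, R v * gainG eqv f m j v) * ∏ s : Fin k, ∑ v, R v * κ s v := by
    rw [Fintype.prod_option]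
    rfl
  have hprod2 : ∀ v : Vec I B, (∏ o : Option (Fin k),
        (Option.elim o (gainG eqv f m j v) (fun s => κ s v))) =
      gainG eqv f m j v * ∏ s : Fin k, κ s v := by
    intro v
    rw [Fintype.prod_option]
    rfl
  have hhar2 : (∑ v, R v * gainG eqv f m j v) * (∏ s : Fin k, ∑ v, R v * κ s v) ≤
      ∑ v, R v * (gainG eqv f m j v * ∏ s : Fin k, κ s v) := by
    calc (∑ v, R v * gainG eqv f m j v) * (∏ s : Fin k, ∑ v, R v * κ s v)
        = ∏ o : Option (Fin k), ∑ v, R v *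
            (Option.elim o (gainG eqv f m j v) (fun s => κ s v)) := hprod1.symm
      _ ≤ ∑ v, R v * ∏ o : Option (Fin k),
            (Option.elim o (gainG eqv f m j v) (fun s => κ s v)) := hhar
      _ = ∑ v, R v * (gainG eqv f m j v * ∏ s : Fin k, κ s v) :=
          Finset.sum_congr rfl fun v _ => by rw [hprod2]
  have hEκ : ∀ s, α s ≤ ∑ v, R v * κ s v := fun s =>
    le_of_mul_le_mul_left (hκE s) hqpos
  have hAprod : (∏ t, α t) ≤ ∏ s : Fin k, ∑ v, R v * κ s v :=
    Finset.prod_le_prod (fun s _ => (hα s).1) (fun s _ => hEκ s)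
  have hkeep : ∀ v : Vec I B, R v * (gainG eqv f m j v * ∏ s : Fin k, κ s v) ≤
      R v * (gainG eqv f m j v *
        ∑ u : Vec I B, (if u i = v i then compKer k Ψ k v u else 0)) := by
    intro v
    by_cases hRv : R v = 0
    · rw [hRv, zero_mul, zero_mul]
    · have hvi := hRsupp v hRv
      have h1 : (∏ s : Fin k, κ s v) =
          ∏ s : Fin k, ∑ w : Vec I B, (if w i = j then Ψ s v w else 0) :=
        Finset.prod_congr rfl fun s _ => hκrepl s v hRv
      have h2 := compKer_keep_all hK0 hsupp hmono' i j v hvi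
      have h3 : (∑ u : Vec I B, (if u i = v i then compKer k Ψ k v u else 0)) =
          ∑ u : Vec I B, (if u i = j then compKer k Ψ k v u else 0) := by rw [hvi]
      rw [h1, h3]
      exact mul_le_mul_of_nonneg_left (mul_le_mul_of_nonneg_left h2 (hG0 v)) (hR0 v)
  calc (∏ t, α t) * ∑ v : Vec I B, (if v i = j then vecProb q v * gainG eqv f m j v else 0)
      = (∏ t, α t) * (q i j * ∑ v, R v * gainG eqv f m j v) := by
        rw [Finset.sum_congr rfl fun v _ => hca (gainG eqv f m j) v, ← Finset.mul_sum]
    _ = q i j * ((∏ t, α t) * ∑ v, R v * gainG eqv f m j v) := by ring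
    _ ≤ q i j * ((∑ v, R v * gainG eqv f m j v) * ∏ s : Fin k, ∑ v, R v * κ s v) := by
        refine mul_le_mul_of_nonneg_left ?_ hqpos.le
        rw [mul_comm (∏ t, α t)]
        exact mul_le_mul_of_nonneg_left hAprod hEG0
    _ ≤ q i j * ∑ v, R v * (gainG eqv f m j v * ∏ s : Fin k, κ s v) :=
        mul_le_mul_of_nonneg_left hhar2 hqpos.le
    _ ≤ q i j * ∑ v, R v * (gainG eqv f m j v *
          ∑ u : Vec I B, (if u i = v i then compKer k Ψ k v u else 0)) :=
        mul_le_mul_of_nonneg_left (Finset.sum_le_sum fun v _ => hkeep v) hqpos.le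
    _ = ∑ v : Vec I B, (if v i = j then vecProb q v * (gainG eqv f m j v *
          ∑ u : Vec I B, (if u i = v i then compKer k Ψ k v u else 0)) else 0) := by
        rw [Finset.mul_sum]
        exact (Finset.sum_congr rfl fun v _ => hca
          (fun v => gainG eqv f m j v *
            ∑ u : Vec I B, (if u i = v i then compKer k Ψ k v u else 0)) v).symm

end claim

/-- If each downward-closed family `F t` admits a monotone `α t`-CRS with respect to `q`,
and `f` is nonnegative, monotone and lattice submodular, then there is a randomized mapping
`ψ` whose output always lies in `⋂ t, F t`, keeps each coordinate of the input or zeroes it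
out, and satisfies `E[f u] ≥ (∏ t, α t) ⬝ E[f v]` for `v ∼ q`, `u ∼ ψ v`. -/
theorem exists_CRS_intersection_expected_value
    {I : Type} [Fintype I] [DecidableEq I] {B : ℕ}
    (q : I → Fin (B + 1) → ℝ) (hq : IsDist q)
    (f : Vec I B → ℝ) (hf0 : ∀ v, 0 ≤ f v) (hfmono : Monotone f)
    (hfsub : LatticeSubmodular f)
    (k : ℕ) (F : Fin k → Set (Vec I B)) (α : Fin k → ℝ)
    (hα : ∀ t, α t ∈ Set.Icc (0 : ℝ) 1)
    (hdc : ∀ t, DownwardClosed (F t))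
    (hcrs : ∀ t, ∃ ψ : Vec I B → Vec I B → ℝ, IsCRS q (F t) (α t) ψ ∧ MonotoneCRS ψ) :
    ∃ ψ : Vec I B → Vec I B → ℝ, IsKernel ψ ∧
      (∀ v u, ψ v u ≠ 0 → u ∈ ⋂ t, F t ∧ ∀ i, u i = 0 ∨ u i = v i) ∧
      ∑ v : Vec I B, ∑ u : Vec I B, vecProb q v * ψ v u * f u ≥
        (∏ t, α t) * ∑ v : Vec I B, vecProb q v * f v := by
  classical
  obtain ⟨hq0, hq1⟩ := hq
  choose Ψ hΨ hΨmono using hcrs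
  have hK0 : ∀ s (v u : Vec I B), 0 ≤ Ψ s v u := fun s => (hΨ s).1.1
  have hK1 : ∀ s (v : Vec I B), ∑ u, Ψ s v u = 1 := fun s v => (hΨ s).1.2 v
  have hsupp : ∀ s (v u : Vec I B), Ψ s v u ≠ 0 → ∀ i, u i = 0 ∨ u i = v i :=
    fun s v u h => ((hΨ s).2.1 v u h).2
  have hmem : ∀ s (v u : Vec I B), Ψ s v u ≠ 0 → u ∈ F s :=
    fun s v u h => ((hΨ s).2.1 v u h).1
  have hbal : ∀ (s : Fin k) (i : I) (j : Fin (B + 1)), j ≠ 0 →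
      ∑ v : Vec I B, ∑ u : Vec I B,
          (if v i = j ∧ u i = j then vecProb q v * Ψ s v u else 0) ≥
        α s * ∑ v : Vec I B, (if v i = j then vecProb q v else 0) := fun s => (hΨ s).2.2
  have hmono' : ∀ s, ∀ (a b : Vec I B) (i : I), a ≤ b → a i = b i →
      ∑ w : Vec I B, (if w i = a i then Ψ s a w else 0) ≥
        ∑ w : Vec I B, (if w i = b i then Ψ s b w else 0) := fun s => hΨmono s
  have hψ0 : ∀ v u : Vec I B, 0 ≤ compKer k Ψ k v u := compKer_nonneg hK0 k
  have hψ1 : ∀ v : Vec I B, ∑ u, compKer k Ψ k v u = 1 := compKer_sum hK0 hK1 k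
  have hψsupp := compKer_support (k := k) (Ψ := Ψ) hsupp k
  refine ⟨compKer k Ψ k, ⟨hψ0, hψ1⟩, ?_, ?_⟩
  · intro v u hne
    exact ⟨Set.mem_iInter.mpr fun s =>
      compKer_mem F (fun s => hdc s) hsupp hmem k v u hne s s.isLt,
      hψsupp v u hne⟩
  rw [ge_iff_le]
  have eqv : I ≃ Fin (Fintype.card I) := Fintype.equivFin I
  have hA0 : 0 ≤ ∏ t, α t := Finset.prod_nonneg fun t _ => (hα t).1
  have hA1 : (∏ t, α t) ≤ 1 := Finset.prod_le_one (fun t _ => (hα t).1) fun t _ => (hα t).2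
  have hP0 : ∀ v : Vec I B, 0 ≤ vecProb q v := vecProb_nonneg hq0
  have hPsum : ∑ v : Vec I B, vecProb q v = 1 := vecProb_sum hq1
  -- Step 1 : conditional expectation bound for each fixed v
  have step1 : ∀ v : Vec I B,
      f 0 + ∑ m : Fin (Fintype.card I), (if v (eqv.symm m) ≠ 0 then
          gainG eqv f m (v (eqv.symm m)) v *
            ∑ u : Vec I B, (if u (eqv.symm m) = v (eqv.symm m) then compKer k Ψ k v u else 0)
        else 0) ≤ ∑ u : Vec I B, compKer k Ψ k v u * f u := by
    intro v
    have h1 : ∀ u : Vec I B, compKer k Ψ k v u *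
        (f 0 + ∑ m : Fin (Fintype.card I),
          (if u (eqv.symm m) = v (eqv.symm m) ∧ v (eqv.symm m) ≠ 0 then
            gainG eqv f m (v (eqv.symm m)) v else 0)) ≤ compKer k Ψ k v u * f u := by
      intro u
      by_cases h : compKer k Ψ k v u = 0
      · rw [h, zero_mul, zero_mul]
      · exact mul_le_mul_of_nonneg_left
          (pointwise_bound hfmono hfsub v u (hψsupp v u h)) (hψ0 v u)
    have h2 : ∑ u : Vec I B, compKer k Ψ k v u *
        (f 0 + ∑ m : Fin (Fintype.card I),
          (if u (eqv.symm m) = v (eqv.symm m) ∧ v (eqv.symm m) ≠ 0 then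
            gainG eqv f m (v (eqv.symm m)) v else 0)) =
        f 0 + ∑ m : Fin (Fintype.card I), (if v (eqv.symm m) ≠ 0 then
          gainG eqv f m (v (eqv.symm m)) v *
            ∑ u : Vec I B, (if u (eqv.symm m) = v (eqv.symm m) then compKer k Ψ k v u else 0)
          else 0) := by
      have e1 : ∀ u : Vec I B, compKer k Ψ k v u *
          (f 0 + ∑ m : Fin (Fintype.card I),
            (if u (eqv.symm m) = v (eqv.symm m) ∧ v (eqv.symm m) ≠ 0 then
              gainG eqv f m (v (eqv.symm m)) v else 0)) =
          compKer k Ψ k v u * f 0 + ∑ m : Fin (Fintype.card I), compKer k Ψ k v u *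
            (if u (eqv.symm m) = v (eqv.symm m) ∧ v (eqv.symm m) ≠ 0 then
              gainG eqv f m (v (eqv.symm m)) v else 0) := by
        intro u
        rw [mul_add, Finset.mul_sum]
      rw [Finset.sum_congr rfl fun u _ => e1 u, Finset.sum_add_distrib, ← Finset.sum_mul,
        hψ1, one_mul, Finset.sum_comm]
      congr 1
      refine Finset.sum_congr rfl fun m _ => ?_
      by_cases hv0 : v (eqv.symm m) = 0
      · rw [if_neg (fun hc => hc hv0)]
        refine Finset.sum_eq_zero fun u _ => ?_
        rw [if_neg (fun hc => hc.2 hv0), mul_zero]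
      · rw [if_pos hv0, Finset.mul_sum]
        refine Finset.sum_congr rfl fun u _ => ?_
        by_cases hu : u (eqv.symm m) = v (eqv.symm m)
        · rw [if_pos (⟨hu, hv0⟩ : _ ∧ _), if_pos hu, mul_comm]
        · rw [if_neg (fun hc => hu hc.1), if_neg hu, mul_zero, mul_zero]
    calc f 0 + ∑ m : Fin (Fintype.card I), (if v (eqv.symm m) ≠ 0 then
            gainG eqv f m (v (eqv.symm m)) v *
              ∑ u : Vec I B, (if u (eqv.symm m) = v (eqv.symm m) then compKer k Ψ k v u else 0)
          else 0)
        = ∑ u : Vec I B, compKer k Ψ k v u *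
            (f 0 + ∑ m : Fin (Fintype.card I),
              (if u (eqv.symm m) = v (eqv.symm m) ∧ v (eqv.symm m) ≠ 0 then
                gainG eqv f m (v (eqv.symm m)) v else 0)) := h2.symm
      _ ≤ ∑ u : Vec I B, compKer k Ψ k v u * f u := Finset.sum_le_sum fun u _ => h1 u
  -- splitting a sum according to the value of coordinate `eqv.symm m`
  have hsplit : ∀ (X : Fin (B + 1) → Vec I B → ℝ) (m : Fin (Fintype.card I)),
      ∑ v : Vec I B, vecProb q v * (if v (eqv.symm m) ≠ 0 then X (v (eqv.symm m)) v else 0) =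
      ∑ j : Fin (B + 1), ∑ v : Vec I B,
        (if v (eqv.symm m) = j ∧ j ≠ 0 then vecProb q v * X j v else 0) := by
    intro X m
    rw [Finset.sum_comm]
    refine Finset.sum_congr rfl fun v _ => ?_
    have e : ∀ j : Fin (B + 1),
        (if v (eqv.symm m) = j ∧ j ≠ 0 then vecProb q v * X j v else 0) =
        if j = v (eqv.symm m) then
          (if v (eqv.symm m) ≠ 0 then vecProb q v * X (v (eqv.symm m)) v else 0) else 0 := by
      intro j
      by_cases h1 : j = v (eqv.symm m)
      · by_cases h2 : j ≠ 0
        · have hv0 : v (eqv.symm m) ≠ 0 := h1 ▸ h2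
          rw [if_pos (⟨h1.symm, h2⟩ : _ ∧ _), if_pos h1, if_pos hv0, h1]
        · push_neg at h2
          have hv0 : v (eqv.symm m) = 0 := h1.symm.trans h2
          rw [if_neg (fun hc => hc.2 h2), if_pos h1, if_neg (fun hc => hc hv0)]
      · rw [if_neg (fun hc => h1 hc.1.symm), if_neg h1]
    rw [Finset.sum_congr rfl fun j _ => e j, Finset.sum_ite_eq' univ (v (eqv.symm m)),
      if_pos (mem_univ _), mul_ite, mul_zero]
  -- Step 2 : the FKG-based bound for each m
  have step2 : ∀ m : Fin (Fintype.card I),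
      (∏ t, α t) * ∑ v : Vec I B, vecProb q v *
        (if v (eqv.symm m) ≠ 0 then gainG eqv f m (v (eqv.symm m)) v else 0) ≤
      ∑ v : Vec I B, vecProb q v * (if v (eqv.symm m) ≠ 0 then
        gainG eqv f m (v (eqv.symm m)) v *
          ∑ u : Vec I B, (if u (eqv.symm m) = v (eqv.symm m) then compKer k Ψ k v u else 0)
        else 0) := by
    intro m
    rw [hsplit (fun j v => gainG eqv f m j v) m,
      hsplit (fun j v => gainG eqv f m j v *
        ∑ u : Vec I B, (if u (eqv.symm m) = v (eqv.symm m) then compKer k Ψ k v u else 0)) m,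
      Finset.mul_sum]
    refine Finset.sum_le_sum fun j _ => ?_
    by_cases hj : j = 0
    · subst hj
      rw [Finset.sum_eq_zero (fun v _ => if_neg fun hc => hc.2 rfl),
        Finset.sum_eq_zero (fun v _ => if_neg fun hc => hc.2 rfl), mul_zero]
    · have hc2 : ∀ (Y : Vec I B → ℝ) (v : Vec I B),
          (if v (eqv.symm m) = j ∧ j ≠ 0 then Y v else 0) =
          (if v (eqv.symm m) = j then Y v else 0) := by
        intro Y v
        by_cases hv : v (eqv.symm m) = j
        · rw [if_pos (⟨hv, hj⟩ : _ ∧ _), if_pos hv]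
        · rw [if_neg (fun hc => hv hc.1), if_neg hv]
      rw [Finset.sum_congr rfl fun v (_ : v ∈ univ) =>
          hc2 (fun v => vecProb q v * gainG eqv f m j v) v,
        Finset.sum_congr rfl fun v (_ : v ∈ univ) =>
          hc2 (fun v => vecProb q v * (gainG eqv f m j v *
            ∑ u : Vec I B, (if u (eqv.symm m) = v (eqv.symm m) then compKer k Ψ k v u else 0))) v]
      exact claim2_lemma q hq0 hq1 f hfmono hfsub hK0 hsupp hmono' α hα hbal eqv m j hj
  -- final assembly
  have hsub : ∑ v : Vec I B, vecProb q v * (f v - f 0) =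
      (∑ v : Vec I B, vecProb q v * f v) - f 0 := by
    rw [Finset.sum_congr rfl fun v (_ : v ∈ univ) => mul_sub (vecProb q v) (f v) (f 0),
      Finset.sum_sub_distrib, ← Finset.sum_mul, hPsum, one_mul]
  calc (∏ t, α t) * ∑ v : Vec I B, vecProb q v * f v
      ≤ f 0 * (1 - ∏ t, α t) + (∏ t, α t) * ∑ v : Vec I B, vecProb q v * f v := by
        have h := mul_nonneg (hf0 0) (by linarith : (0:ℝ) ≤ 1 - ∏ t, α t)
        linarith
    _ = f 0 + (∏ t, α t) * ∑ v : Vec I B, vecProb q v * (f v - f 0) := by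
        rw [hsub]; ring
    _ = f 0 + ∑ m : Fin (Fintype.card I), (∏ t, α t) * ∑ v : Vec I B, vecProb q v *
          (if v (eqv.symm m) ≠ 0 then gainG eqv f m (v (eqv.symm m)) v else 0) := by
        congr 1
        rw [← Finset.mul_sum]
        congr 1
        rw [Finset.sum_comm]
        refine Finset.sum_congr rfl fun v _ => ?_
        rw [← Finset.mul_sum, telescope_ite]
    _ ≤ f 0 + ∑ m : Fin (Fintype.card I), ∑ v : Vec I B, vecProb q v *
          (if v (eqv.symm m) ≠ 0 then gainG eqv f m (v (eqv.symm m)) v *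
            ∑ u : Vec I B, (if u (eqv.symm m) = v (eqv.symm m) then compKer k Ψ k v u else 0)
          else 0) :=
        add_le_add le_rfl (Finset.sum_le_sum fun m _ => step2 m)
    _ = ∑ v : Vec I B, vecProb q v * (f 0 + ∑ m : Fin (Fintype.card I),
          (if v (eqv.symm m) ≠ 0 then gainG eqv f m (v (eqv.symm m)) v *
            ∑ u : Vec I B, (if u (eqv.symm m) = v (eqv.symm m) then compKer k Ψ k v u else 0)
          else 0)) := by
        symm
        have e1 : ∀ v : Vec I B, vecProb q v * (f 0 + ∑ m : Fin (Fintype.card I),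
            (if v (eqv.symm m) ≠ 0 then gainG eqv f m (v (eqv.symm m)) v *
              ∑ u : Vec I B, (if u (eqv.symm m) = v (eqv.symm m) then compKer k Ψ k v u else 0)
            else 0)) = vecProb q v * f 0 + ∑ m : Fin (Fintype.card I), vecProb q v *
            (if v (eqv.symm m) ≠ 0 then gainG eqv f m (v (eqv.symm m)) v *
              ∑ u : Vec I B, (if u (eqv.symm m) = v (eqv.symm m) then compKer k Ψ k v u else 0)
            else 0) := by
          intro v
          rw [mul_add, Finset.mul_sum]
        rw [Finset.sum_congr rfl fun v _ => e1 v, Finset.sum_add_distrib, ← Finset.sum_mul,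
          hPsum, one_mul, Finset.sum_comm]
    _ ≤ ∑ v : Vec I B, vecProb q v * ∑ u : Vec I B, compKer k Ψ k v u * f u :=
        Finset.sum_le_sum fun v _ => mul_le_mul_of_nonneg_left (step1 v) (hP0 v)
    _ = ∑ v : Vec I B, ∑ u : Vec I B, vecProb q v * compKer k Ψ k v u * f u := by
        refine Finset.sum_congr rfl fun v _ => ?_
        rw [Finset.mul_sum]
        exact Finset.sum_congr rfl fun u _ => by ring
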